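/- Suppose m ≥ 2, u₁,…,u_m is a basis of V over E orthogonal with respect to Φ, d_j := Φ(u_j,u_j), and there is a ring embedding σ₀ : E → ℝ such that σ₀(d₁) > 0, σ₀(d₂) > 0, σ₀(d_j) < 0 for 3 ≤ j ≤ m, and σ(d_j) < 0 for every ring embedding σ : E → ℝ with σ ≠ σ₀ and every j. Then the real quadratic form ξ ↦ B_ℝ(ξ,ξ) on the (m·r)-dimensional ℝ-vector space V ⊗_ℚ ℝ has signature (2, m·r − 2), i.e. it is equivalent over ℝ to a diagonal quadratic form with exactly 2 coefficients equal to +1 and m·r − 2 coefficients equal to −1. -/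

import Mathlib

open scoped TensorProduct

/-- Auxiliary: an equivalence of a fintype with `Fin n` sending the elements
satisfying a predicate (of which there are `k`) to the first `k` indices. -/
lemma aux_equiv_front {α : Type*} [Fintype α] (P : α → Prop) [DecidablePred P]
    (n k : ℕ) (hn : Fintype.card α = n) (hk : Fintype.card {a // P a} = k) :
    ∃ e : α ≃ Fin n, ∀ a, P a ↔ (e a : ℕ) < k := by
  have hkn : k ≤ n := by
    rw [← hn, ← hk]; exact Fintype.card_subtype_le _
  have hc : Fintype.card {a // ¬ P a} = n - k := by
    rw [Fintype.card_subtype_compl, hn, hk]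
  let e1 := Fintype.equivFinOfCardEq hk
  let e2 := Fintype.equivFinOfCardEq hc
  let e : α ≃ Fin n := ((Equiv.sumCompl P).symm.trans ((e1.sumCongr e2).trans
    (finSumFinEquiv.trans (finCongr (Nat.add_sub_cancel' hkn)))))
  refine ⟨e, fun a => ?_⟩
  by_cases h : P a
  · simp only [e, Equiv.trans_apply, Equiv.sumCompl_symm_apply_of_pos h,
      Equiv.sumCongr_apply, Sum.map_inl, finSumFinEquiv_apply_left, finCongr_apply,
      Fin.coe_cast, Fin.coe_castAdd]
    exact iff_of_true h (e1 ⟨a, h⟩).2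
  · simp only [e, Equiv.trans_apply, Equiv.sumCompl_symm_apply_of_neg h,
      Equiv.sumCongr_apply, Sum.map_inr, finSumFinEquiv_apply_right, finCongr_apply,
      Fin.coe_cast, Fin.coe_natAdd]
    exact iff_of_false h (by omega)

/-- Auxiliary: for a totally real field, real embeddings biject with complex ones. -/
noncomputable def auxRealEmbEquiv (E : Type*) [Field E]
    (htotreal : ∀ (σ : E →+* ℂ) (x : E), (σ x).im = 0) :
    (E →+* ℝ) ≃ (E →+* ℂ) := by
  refine Equiv.ofBijective (fun σ => Complex.ofRealHom.comp σ) ⟨?_, ?_⟩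
  · intro σ τ h
    ext x
    exact Complex.ofReal_injective (congrArg (fun f => f x) h)
  · intro σ
    refine ⟨{ toFun := fun x => (σ x).re
              map_one' := by simp
              map_mul' := fun x y => by simp [Complex.mul_re, htotreal σ x]
              map_zero' := by simp
              map_add' := fun x y => by simp }, ?_⟩
    ext x
    exact Complex.ext rfl (htotreal σ x).symm

lemma auxRealEmbEquiv_apply (E : Type*) [Field E]
    (htotreal : ∀ (σ : E →+* ℂ) (x : E), (σ x).im = 0) (σ : E →+* ℝ) (x : E) :
    auxRealEmbEquiv E htotreal σ x = ((σ x : ℝ) : ℂ) := rfl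

/-- Auxiliary: trace as a sum over real embeddings, for a totally real field. -/
lemma aux_trace_eq_sum (E : Type*) [Field E] [NumberField E]
    (htotreal : ∀ (σ : E →+* ℂ) (x : E), (σ x).im = 0) (x : E) :
    ((Algebra.trace ℚ E x : ℚ) : ℝ) = ∑ τ : E →+* ℝ, τ x := by
  apply Complex.ofReal_injective
  have h1 : ((Algebra.trace ℚ E x : ℚ) : ℂ) = ∑ φ : E →ₐ[ℚ] ℂ, φ x := by
    have := trace_eq_sum_embeddings (K := ℚ) (L := E) (E := ℂ) (x := x)
    simpa using this
  have h2 : ∑ φ : E →ₐ[ℚ] ℂ, φ x = ∑ σ : E →+* ℂ, σ x := by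
    refine (Fintype.sum_equiv (RingHom.equivRatAlgHom E ℂ) (fun σ => σ x)
      (fun φ => φ x) (fun σ => rfl)).symm
  have h3 : ∑ σ : E →+* ℂ, σ x = ∑ τ : E →+* ℝ, ((τ x : ℝ) : ℂ) := by
    refine (Fintype.sum_equiv (auxRealEmbEquiv E htotreal)
      (fun τ => ((τ x : ℝ) : ℂ)) (fun σ => σ x) (fun τ => rfl)).symm
  rw [show (((Algebra.trace ℚ E x : ℚ) : ℝ) : ℂ) = ((Algebra.trace ℚ E x : ℚ) : ℂ) by
    push_cast; ring]
  rw [h1, h2, h3]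
  push_cast
  ring

/-- `E` totally real of degree `r`, `Φ` a nondegenerate symmetric
`E`-bilinear form on the `m`-dimensional (`m ≥ 2`) `E`-vector space `V` with a
`Φ`-orthogonal basis `u₁,…,u_m`, `d_j = Φ(u_j,u_j)`, and `σ₀ : E → ℝ` an embedding
with `σ₀(d₁) > 0`, `σ₀(d₂) > 0`, `σ₀(d_j) < 0` for `3 ≤ j ≤ m`, and `σ(d_j) < 0` for
all `σ ≠ σ₀` and all `j`.  Then the real quadratic form `ξ ↦ B(ξ,ξ)` on the
`(m·r)`-dimensional space `V ⊗_ℚ ℝ` (with `B` the `ℝ`-bilinear extension of `tr∘Φ`)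
has signature `(2, m·r − 2)`: it is equivalent over `ℝ` to a diagonal quadratic form
with exactly `2` coefficients `+1` and `m·r − 2` coefficients `−1`. -/
theorem stmt10 (E V : Type*) [Field E] [NumberField E]
    (htotreal : ∀ (σ : E →+* ℂ) (x : E), (σ x).im = 0)
    (r : ℕ) (hr : Module.finrank ℚ E = r)
    [AddCommGroup V] [Module E V] [Module ℚ V] [IsScalarTower ℚ E V]
    (Φ : V → V → E)
    (hΦadd1 : ∀ x x' y, Φ (x + x') y = Φ x y + Φ x' y)
    (hΦsmul1 : ∀ (e : E) (x y : V), Φ (e • x) y = e * Φ x y)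
    (hΦsymm : ∀ x y, Φ x y = Φ y x)
    (hΦnondeg : ∀ x, (∀ y, Φ x y = 0) → x = 0)
    (m : ℕ) (hm : 2 ≤ m) (u : Module.Basis (Fin m) E V)
    (horth : ∀ i j : Fin m, i ≠ j → Φ (u i) (u j) = 0)
    (d : Fin m → E) (hd : ∀ j, d j = Φ (u j) (u j))
    (σ₀ : E →+* ℝ)
    (hσ₀1 : ∀ j : Fin m, (j : ℕ) = 0 → 0 < σ₀ (d j))
    (hσ₀2 : ∀ j : Fin m, (j : ℕ) = 1 → 0 < σ₀ (d j))
    (hσ₀neg : ∀ j : Fin m, 2 ≤ (j : ℕ) → σ₀ (d j) < 0)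
    (hother : ∀ σ : E →+* ℝ, σ ≠ σ₀ → ∀ j : Fin m, σ (d j) < 0)
    (B : (ℝ ⊗[ℚ] V) →ₗ[ℝ] (ℝ ⊗[ℚ] V) →ₗ[ℝ] ℝ)
    (hB : ∀ (c c' : ℝ) (x y : V),
      B (c ⊗ₜ[ℚ] x) (c' ⊗ₜ[ℚ] y) = c * c' * ((Algebra.trace ℚ E (Φ x y) : ℚ) : ℝ)) :
    ∃ g : (ℝ ⊗[ℚ] V) ≃ₗ[ℝ] (Fin (m * r) → ℝ), ∀ ξ : ℝ ⊗[ℚ] V,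
      B ξ ξ = ∑ i : Fin (m * r),
        (if (i : ℕ) < 2 then (1 : ℝ) else -1) * (g ξ i) ^ 2 := by
  classical
  -- bilinearity of Φ in the second variable
  have hΦadd2 : ∀ x y y', Φ x (y + y') = Φ x y + Φ x y' := fun x y y' => by
    rw [hΦsymm, hΦadd1, hΦsymm y x, hΦsymm y' x]
  have hΦsmul2 : ∀ (e : E) (x y : V), Φ x (e • y) = e * Φ x y := fun e x y => by
    rw [hΦsymm, hΦsmul1, hΦsymm]
  -- Φ as a bilinear map
  let Φl : V →ₗ[E] V →ₗ[E] E :=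
    { toFun := fun x =>
        { toFun := Φ x
          map_add' := hΦadd2 x
          map_smul' := fun e y => hΦsmul2 e x y }
      map_add' := fun x x' => LinearMap.ext fun y => hΦadd1 x x' y
      map_smul' := fun e x => LinearMap.ext fun y => hΦsmul1 e x y }
  have hΦl : ∀ x y, Φ x y = Φl x y := fun x y => rfl
  -- expansion of Φ in the orthogonal basis
  have hΦsum : ∀ x y : V, Φ x y = ∑ j, u.repr x j * (u.repr y j * d j) := by
    intro x y
    calc Φ x y = Φl x y := rfl
      _ = Φl (∑ i, u.repr x i • u i) (∑ j, u.repr y j • u j) := by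
          rw [u.sum_repr x, u.sum_repr y]
      _ = ∑ i, u.repr x i * Φl (u i) (∑ j, u.repr y j • u j) := by
          rw [map_sum Φl (fun i => u.repr x i • u i) Finset.univ, LinearMap.sum_apply]
          exact Finset.sum_congr rfl fun i _ => by rw [map_smul]; rfl
      _ = ∑ i, u.repr x i * (u.repr y i * d i) := by
          refine Finset.sum_congr rfl fun i _ => ?_
          congr 1
          rw [map_sum, Finset.sum_eq_single i]
          · rw [map_smul, smul_eq_mul, hd]; rfl
          · intro j _ hj
            rw [map_smul, smul_eq_mul, ← hΦl, horth i j (Ne.symm hj), mul_zero]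
          · intro h
            exact absurd (Finset.mem_univ i) h
  -- the coordinate map
  let f : V →ₗ[ℚ] ((E →+* ℝ) × Fin m → ℝ) :=
    { toFun := fun x p => p.1 (u.repr x p.2)
      map_add' := fun x y => by
        ext p
        simp [map_add]
      map_smul' := fun q x => by
        ext p
        have h1 : q • x = (algebraMap ℚ E q) • x := (algebraMap_smul E q x).symm
        simp only [RingHom.id_apply, Pi.smul_apply]
        rw [h1, map_smul, Finsupp.smul_apply, smul_eq_mul, map_mul,
          eq_ratCast (algebraMap ℚ E) q, map_ratCast, Rat.smul_def] }
    -- base-changed coordinate map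
  let T : (ℝ ⊗[ℚ] V) →ₗ[ℝ] ((E →+* ℝ) × Fin m → ℝ) := f.liftBaseChange ℝ
  have hT : ∀ (c : ℝ) (x : V) (p), T (c ⊗ₜ[ℚ] x) p = c * p.1 (u.repr x p.2) := by
    intro c x p
    rw [show T (c ⊗ₜ[ℚ] x) = c • f x from LinearMap.liftBaseChange_tmul _ _ _ _]
    rfl
  -- the trace formula
  have htr : ∀ x : E, ((Algebra.trace ℚ E x : ℚ) : ℝ) = ∑ τ : E →+* ℝ, τ x :=
    aux_trace_eq_sum E htotreal
  -- the diagonalization identity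
  have hdiag : ∀ ξ η, B ξ η =
      ∑ p : (E →+* ℝ) × Fin m, p.1 (d p.2) * (T ξ p * T η p) := by
    have key : ∀ (c c' : ℝ) (x y : V),
        B (c ⊗ₜ[ℚ] x) (c' ⊗ₜ[ℚ] y)
          = ∑ p : (E →+* ℝ) × Fin m, p.1 (d p.2) * (T (c ⊗ₜ[ℚ] x) p * T (c' ⊗ₜ[ℚ] y) p) := by
      intro c c' x y
      rw [hB, htr (Φ x y), Fintype.sum_prod_type, Finset.mul_sum]
      refine Finset.sum_congr rfl fun τ _ => ?_
      rw [hΦsum x y, map_sum, Finset.mul_sum]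
      refine Finset.sum_congr rfl fun j _ => ?_
      rw [hT, hT, map_mul, map_mul]
      ring
    intro ξ η
    induction ξ using TensorProduct.induction_on with
    | zero =>
        simp
    | tmul c x =>
        induction η using TensorProduct.induction_on with
        | zero => simp
        | tmul c' y => exact key c c' x y
        | add η₁ η₂ h1 h2 =>
            simp only [map_add, LinearMap.add_apply, Pi.add_apply, h1, h2]
            rw [← Finset.sum_add_distrib]
            exact Finset.sum_congr rfl fun p _ => by ring
    | add ξ₁ ξ₂ h1 h2 =>
        simp only [map_add, LinearMap.add_apply, Pi.add_apply, h1, h2]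
        rw [← Finset.sum_add_distrib]
        exact Finset.sum_congr rfl fun p _ => by ring
  -- finiteness
  haveI : Module.Finite E V := Module.Finite.of_basis u
  haveI : Module.Finite ℚ V := Module.Finite.trans E V
  -- the rational bilinear form tr ∘ Φ
  let bQ : V →ₗ[ℚ] V →ₗ[ℚ] ℚ :=
    { toFun := fun x =>
        { toFun := fun y => Algebra.trace ℚ E (Φ x y)
          map_add' := fun y y' => by
            show Algebra.trace ℚ E (Φ x (y + y'))
              = Algebra.trace ℚ E (Φ x y) + Algebra.trace ℚ E (Φ x y')
            rw [hΦadd2, map_add]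
          map_smul' := fun q y => by
            show Algebra.trace ℚ E (Φ x (q • y)) = q • Algebra.trace ℚ E (Φ x y)
            rw [show q • y = (algebraMap ℚ E q) • y from (algebraMap_smul E q y).symm,
              hΦsmul2, ← Algebra.smul_def, map_smul] }
      map_add' := fun x x' => LinearMap.ext fun y => by
        show Algebra.trace ℚ E (Φ (x + x') y)
          = Algebra.trace ℚ E (Φ x y) + Algebra.trace ℚ E (Φ x' y)
        rw [hΦadd1, map_add]
      map_smul' := fun q x => LinearMap.ext fun y => by
        show Algebra.trace ℚ E (Φ (q • x) y) = q • Algebra.trace ℚ E (Φ x y)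
        rw [show q • x = (algebraMap ℚ E q) • x from (algebraMap_smul E q x).symm,
          hΦsmul1, ← Algebra.smul_def, map_smul] }
  have hbQ : ∀ x, (∀ y, bQ x y = 0) → x = 0 := by
    intro x hx
    apply hΦnondeg
    intro y
    apply (traceForm_nondegenerate ℚ E).1 (Φ x y)
    intro e
    rw [Algebra.traceForm_apply, mul_comm, ← hΦsmul2 e x y]
    exact hx (e • y)
  -- B is nondegenerate
  let w := Module.finBasis ℚ V
  let wB := w.baseChange ℝ
  have hmat : LinearMap.BilinForm.toMatrix wB B
      = (LinearMap.BilinForm.toMatrix w bQ).map ((Rat.castHom ℝ) : ℚ → ℝ) := by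
    ext i j
    rw [LinearMap.BilinForm.toMatrix_apply, Matrix.map_apply,
      LinearMap.BilinForm.toMatrix_apply]
    show B (wB i) (wB j) = _
    rw [show wB i = (1 : ℝ) ⊗ₜ[ℚ] w i from Module.Basis.baseChange_apply ℝ w i,
      show wB j = (1 : ℝ) ⊗ₜ[ℚ] w j from Module.Basis.baseChange_apply ℝ w j, hB]
    show 1 * 1 * ((Algebra.trace ℚ E (Φ (w i) (w j)) : ℚ) : ℝ) = _
    rw [one_mul, one_mul]
    rfl
  have hBnd : ∀ ξ, (∀ η, B ξ η = 0) → ξ = 0 := by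
    have H := (LinearMap.BilinForm.nondegenerate_iff_det_ne_zero (B := B) wB).mpr (by
      rw [hmat, show ((LinearMap.BilinForm.toMatrix w) bQ).map ((Rat.castHom ℝ) : ℚ → ℝ)
          = (Rat.castHom ℝ).mapMatrix ((LinearMap.BilinForm.toMatrix w) bQ) from rfl,
        ← RingHom.map_det]
      have h := (LinearMap.BilinForm.nondegenerate_iff_det_ne_zero (B := bQ) w).mp ⟨hbQ, fun y hy => hbQ y fun x => by
        rw [← hy x]
        show Algebra.trace ℚ E (Φ y x) = Algebra.trace ℚ E (Φ x y)
        rw [hΦsymm]⟩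
      simpa using h)
    exact H.1
  -- T is injective
  have hTker : ∀ ξ, T ξ = 0 → ξ = 0 := by
    intro ξ h
    apply hBnd ξ
    intro η
    rw [hdiag]
    simp [h]
  have hTinj : Function.Injective T :=
    LinearMap.ker_eq_bot.mp (LinearMap.ker_eq_bot'.mpr hTker)
  -- cardinality of real embeddings
  have hcardS : Fintype.card (E →+* ℝ) = r := by
    rw [Fintype.card_congr (auxRealEmbEquiv E htotreal), NumberField.Embeddings.card E ℂ, hr]
  -- dimensions
  have hdim1 : Module.finrank ℝ (ℝ ⊗[ℚ] V) = m * r := by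
    rw [Module.finrank_baseChange, ← Module.finrank_mul_finrank ℚ E V, hr,
      Module.finrank_eq_card_basis u, Fintype.card_fin, mul_comm]
  have hdim2 : Module.finrank ℝ ((E →+* ℝ) × Fin m → ℝ) = m * r := by
    rw [Module.finrank_pi, Fintype.card_prod, hcardS, Fintype.card_fin, mul_comm]
  have hTsurj : Function.Surjective T :=
    (LinearMap.injective_iff_surjective_of_finrank_eq_finrank
      (by rw [hdim1, hdim2])).mp hTinj
  let Teq : (ℝ ⊗[ℚ] V) ≃ₗ[ℝ] ((E →+* ℝ) × Fin m → ℝ) :=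
    LinearEquiv.ofBijective T ⟨hTinj, hTsurj⟩
  -- the predicate selecting the positive coefficients
  set P : (E →+* ℝ) × Fin m → Prop := fun p => p.1 = σ₀ ∧ (p.2 : ℕ) < 2 with hP
  -- this predicate has exactly two elements
  have hcard2 : Fintype.card {p : (E →+* ℝ) × Fin m // P p} = 2 := by
    rw [Fintype.card_congr (Equiv.subtypeProdEquivProd
      (p := fun σ : E →+* ℝ => σ = σ₀) (q := fun j : Fin m => (j : ℕ) < 2)),
      Fintype.card_prod, Fintype.card_subtype_eq σ₀]
    have e2 : {j : Fin m // (j : ℕ) < 2} ≃ Fin 2 :=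
      { toFun := fun j => ⟨(j.1 : ℕ), j.2⟩
        invFun := fun i => ⟨⟨(i : ℕ), lt_of_lt_of_le i.2 hm⟩, i.2⟩
        left_inv := fun j => by
          apply Subtype.ext
          apply Fin.ext
          rfl
        right_inv := fun i => rfl }
    rw [Fintype.card_congr e2, Fintype.card_fin, one_mul]
  have hcardα : Fintype.card ((E →+* ℝ) × Fin m) = m * r := by
    rw [Fintype.card_prod, hcardS, Fintype.card_fin, mul_comm]
  obtain ⟨e, he⟩ := aux_equiv_front P (m * r) 2 hcardα hcard2
  -- every σ(d j) is nonzero, with known sign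
  have hsign : ∀ p : (E →+* ℝ) × Fin m,
      (P p → 0 < p.1 (d p.2)) ∧ (¬ P p → p.1 (d p.2) < 0) := by
    intro p
    constructor
    · rintro ⟨h1, h2⟩
      rw [h1]
      rcases (show (p.2 : ℕ) = 0 ∨ (p.2 : ℕ) = 1 by omega) with h | h
      · exact hσ₀1 p.2 h
      · exact hσ₀2 p.2 h
    · intro hnp
      by_cases h1 : p.1 = σ₀
      · have h2 : 2 ≤ (p.2 : ℕ) := by
          by_contra h2
          exact hnp ⟨h1, by omega⟩
        rw [h1]
        exact hσ₀neg p.2 h2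
      · exact hother p.1 h1 p.2
  have hd0 : ∀ p : (E →+* ℝ) × Fin m, p.1 (d p.2) ≠ 0 := by
    intro p
    by_cases hp : P p
    · exact ne_of_gt ((hsign p).1 hp)
    · exact ne_of_lt ((hsign p).2 hp)
  -- the scaling coefficients
  set c : (E →+* ℝ) × Fin m → ℝ := fun p => Real.sqrt |p.1 (d p.2)| with hc
  have hc0 : ∀ p, c p ≠ 0 := fun p =>
    Real.sqrt_ne_zero'.mpr (abs_pos.mpr (hd0 p))
  -- the scaling-and-reindexing equivalence
  let S : (((E →+* ℝ) × Fin m) → ℝ) ≃ₗ[ℝ] (Fin (m * r) → ℝ) :=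
    { toFun := fun v i => c (e.symm i) * v (e.symm i)
      invFun := fun v' p => (c p)⁻¹ * v' (e p)
      map_add' := fun v v' => by
        ext i
        simp [mul_add]
      map_smul' := fun a v => by
        ext i
        simp only [Pi.smul_apply, smul_eq_mul, RingHom.id_apply]
        ring
      left_inv := fun v => by
        ext p
        show (c p)⁻¹ * (c (e.symm (e p)) * v (e.symm (e p))) = v p
        simp only [Equiv.symm_apply_apply]
        rw [← mul_assoc, inv_mul_cancel₀ (hc0 p), one_mul]
      right_inv := fun v' => by
        ext i
        show c (e.symm i) * ((c (e.symm i))⁻¹ * v' (e (e.symm i))) = v' i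
        rw [← mul_assoc, mul_inv_cancel₀ (hc0 (e.symm i)), one_mul,
          Equiv.apply_symm_apply] }
  refine ⟨Teq.trans S, fun ξ => ?_⟩
  have hg : ∀ i, (Teq.trans S) ξ i = c (e.symm i) * T ξ (e.symm i) := fun i => rfl
  rw [hdiag ξ ξ]
  refine Fintype.sum_equiv e _ _ fun p => ?_
  rw [hg, Equiv.symm_apply_apply]
  have hsq : c p ^ 2 = |p.1 (d p.2)| := Real.sq_sqrt (abs_nonneg _)
  rw [mul_pow, hsq]
  by_cases hp : P p
  · rw [if_pos ((he p).mp hp), abs_of_pos ((hsign p).1 hp)]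
    ring
  · rw [if_neg (fun h => hp ((he p).mpr h)), abs_of_neg ((hsign p).2 hp)]
    ring
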